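/- Let G be an invertible n₁×n₁ real matrix with (G⁻¹)_{ii} ≠ 0 for a fixed index i, and let p > 0. Then, as the real parameter d → ∞, the matrix G − p·d·e_i·e_iᵀ is eventually invertible and lim_{d→∞} (1/(n₁−1))·( ∑_{j=1}^{n₁} (−p·d·((G − p·d·e_i·e_iᵀ)⁻¹)_{ji}) − 1 ) = (1/(n₁−1))·( (∑_{j=1}^{n₁} (G⁻¹)_{ji}) / (G⁻¹)_{ii} − 1 ). -/

import Mathlib

open Matrix Filter Topology

section aux
variable {n : ℕ} (G : Matrix (Fin n) (Fin n) ℝ)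

lemma sherman_right_inv (hG : IsUnit G.det) (i : Fin n) (t : ℝ)
    (h : 1 - t * G⁻¹ i i ≠ 0) :
    (G - Matrix.single i i t) *
      (G⁻¹ + (t / (1 - t * G⁻¹ i i)) • (G⁻¹ * Matrix.single i i 1 * G⁻¹)) = 1 := by
  set A := G⁻¹ with hA
  set a := A i i with ha
  set E := Matrix.single i i (1:ℝ) with hE
  set c := t / (1 - t * a) with hc
  have hGA : G * A = 1 := Matrix.mul_nonsing_inv G hG
  have hT : Matrix.single i i t = t • E := by simp [hE]
  have hEA : ∀ j k, (E * A) j k = if i = j then A i k else 0 := by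
    intro j k
    by_cases hj : j = i
    · subst hj; simp [hE]
    · simp [hE, Matrix.single_mul_apply_of_ne, hj, Ne.symm hj]
  have hEAE : E * A * E = a • E := by
    ext j k
    by_cases hj : i = j <;> by_cases hk : i = k <;>
      simp [hE, Matrix.mul_apply, Matrix.single, hj, hk, ha, ite_and,
        Finset.sum_ite_eq, Finset.sum_ite_eq'] <;>
      simp [ite_and, Finset.sum_ite_eq, Finset.sum_ite_eq', hj, hk, eq_comm]
  have h1 : G * (A * E * A) = E * A := by
    rw [show A * E * A = A * (E * A) by rw [Matrix.mul_assoc], ← Matrix.mul_assoc, hGA,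
      Matrix.one_mul]
  have h2 : E * (A * E * A) = a • (E * A) := by
    rw [show A * E * A = (A * E) * A from rfl, ← Matrix.mul_assoc, ← Matrix.mul_assoc, hEAE,
      Matrix.smul_mul]
  have hceq : c - (t + t * c * a) = 0 := by
    rw [hc]
    field_simp
    ring
  calc (G - Matrix.single i i t) * (A + c • (A * E * A))
      = 1 + c • (E * A) - (t • (E * A) + (t * c * a) • (E * A)) := by
        rw [hT, Matrix.sub_mul, Matrix.mul_add, Matrix.mul_add, hGA, Matrix.mul_smul, h1,
          Matrix.smul_mul, Matrix.smul_mul, Matrix.mul_smul, h2, smul_smul, smul_smul]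
    _ = 1 + (c - (t + t * c * a)) • (E * A) := by
        rw [sub_smul, add_smul]
        abel
    _ = 1 := by rw [hceq, zero_smul, add_zero]


lemma sm_inv_col (hG : IsUnit G.det) (i : Fin n) (t : ℝ)
    (h : 1 - t * G⁻¹ i i ≠ 0) (j : Fin n) :
    (G - Matrix.single i i t)⁻¹ j i = G⁻¹ j i / (1 - t * G⁻¹ i i) := by
  rw [Matrix.inv_eq_right_inv (sherman_right_inv G hG i t h)]
  have hAEA : (G⁻¹ * Matrix.single i i (1:ℝ) * G⁻¹) j i = G⁻¹ j i * G⁻¹ i i := by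
    rw [Matrix.mul_apply, Finset.sum_eq_single i]
    · rw [Matrix.mul_single_apply_same]; ring
    · intro k _ hk
      simp [Matrix.mul_single_apply_of_ne _ _ _ _ _ hk]
    · simp
  rw [Matrix.add_apply, Matrix.smul_apply, hAEA, smul_eq_mul]
  set x := G⁻¹ j i with hx
  set a := G⁻¹ i i with ha
  field_simp
  ring

end aux

/-- As `d → ∞`, `G - p d eᵢeᵢᵀ` is eventually invertible and the limit of the
harmonic-influence expression equals `(1/(n₁-1)) ((∑ⱼ (G⁻¹)ⱼᵢ)/(G⁻¹)ᵢᵢ - 1)`. -/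
theorem harmonic_influence_limit
    (n₁ : ℕ) (hn₁ : 2 ≤ n₁)
    (G : Matrix (Fin n₁) (Fin n₁) ℝ) (hG : IsUnit G.det)
    (i : Fin n₁) (hGii : G⁻¹ i i ≠ 0)
    (p : ℝ) (hp : 0 < p) :
    (∀ᶠ d : ℝ in atTop,
      IsUnit (G - Matrix.single i i (p * d)).det) ∧
    Tendsto
      (fun d : ℝ => (1 / ((n₁ : ℝ) - 1)) *
        ((∑ j, (-(p * d) * (G - Matrix.single i i (p * d))⁻¹ j i)) - 1))
      atTop
      (𝓝 ((1 / ((n₁ : ℝ) - 1)) * ((∑ j, G⁻¹ j i) / G⁻¹ i i - 1))) := by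
  set a := G⁻¹ i i with ha
  have hpd : Tendsto (fun d : ℝ => p * d) atTop atTop :=
    Tendsto.const_mul_atTop hp tendsto_id
  have hev : ∀ᶠ d : ℝ in atTop, 1 - p * d * a ≠ 0 := by
    rcases lt_or_gt_of_ne hGii with hneg | hpos
    · filter_upwards [eventually_gt_atTop 0] with d hd h0
      have : p * d * a < 0 := mul_neg_of_pos_of_neg (mul_pos hp hd) hneg
      linarith
    · filter_upwards [eventually_gt_atTop (1 / (p * a))] with d hd h0
      have hpa : 0 < p * a := mul_pos hp hpos
      rw [div_lt_iff₀ hpa] at hd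
      nlinarith
  refine ⟨hev.mono fun d hd =>
    Matrix.isUnit_det_of_right_inverse (sherman_right_inv G hG i (p * d) hd), ?_⟩
  have hg : Tendsto (fun d : ℝ => -(p * d) / (1 - p * d * a)) atTop (𝓝 a⁻¹) := by
    have h2 : Tendsto (fun d : ℝ => (a - (p * d)⁻¹)⁻¹) atTop (𝓝 a⁻¹) := by
      have := (tendsto_const_nhds.sub hpd.inv_tendsto_atTop).inv₀ (by simpa using hGii)
      simpa using this
    refine h2.congr' ?_
    filter_upwards [eventually_gt_atTop 0] with d hd
    have hx : p * d ≠ 0 := ne_of_gt (mul_pos hp hd)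
    by_cases hy : a - (p * d)⁻¹ = 0
    · have h1 : 1 - p * d * a = 0 := by
        have hai : a = (p * d)⁻¹ := by linarith
        rw [hai]; field_simp; ring
      rw [hy, h1]; simp
    · have h1 : 1 - p * d * a = -(p * d * (a - (p * d)⁻¹)) := by
        field_simp
        ring
      rw [h1, div_neg, neg_div, neg_neg, div_mul_eq_div_div, div_self hx, one_div]
  have hmain : Tendsto
      (fun d : ℝ => (1 / ((n₁ : ℝ) - 1)) *
        ((-(p * d) / (1 - p * d * a)) * (∑ j, G⁻¹ j i) - 1))
      atTop (𝓝 ((1 / ((n₁ : ℝ) - 1)) * ((∑ j, G⁻¹ j i) / a - 1))) := by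
    have := ((hg.mul_const (∑ j, G⁻¹ j i)).sub_const 1).const_mul (1 / ((n₁ : ℝ) - 1))
    simpa [div_eq_mul_inv, mul_comm] using this
  refine hmain.congr' ?_
  filter_upwards [hev] with d hd
  have hs : ∑ j, -(p * d) * (G - Matrix.single i i (p * d))⁻¹ j i
      = (-(p * d) / (1 - p * d * a)) * ∑ j, G⁻¹ j i := by
    rw [Finset.mul_sum]
    refine Finset.sum_congr rfl fun j _ => ?_
    rw [sm_inv_col G hG i (p * d) hd j]
    ring
  rw [hs]
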